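/- Let ℓ ≥ 3 be an integer, let e₁, …, e_{ℓ+1} be the standard orthonormal basis of ℝ^{ℓ+1}, and set u = e₁ − e₂ and v = e_ℓ − e_{ℓ+1}. Let Φ = {ε(e_i − e_j) : 1 ≤ i < j ≤ ℓ+1, ε ∈ {+1,−1}} be the root system of type A_ℓ. Then Σ_{α∈Φ} (⟨α,u⟩⁴ − 6⟨α,u⟩²⟨α,v⟩² + ⟨α,v⟩⁴) = 8ℓ + 8. -/

import Mathlib

open Finset
open scoped Classical

private def dlt {n : ℕ} (p q i : Fin n) : ℝ :=
  (if i = p then 1 else 0) - (if i = q then 1 else 0)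

private lemma dlt_sum {n : ℕ} (p q : Fin n) :
    ∑ i, dlt p q i = 0 := by
  simp [dlt, Finset.sum_sub_distrib]

private lemma dlt_sq {n : ℕ} {p q : Fin n} (h : p ≠ q) (i : Fin n) :
    dlt p q i ^ 2 = (if i = p then 1 else 0) + (if i = q then 1 else 0) := by
  by_cases h0 : i = p
  · subst h0; simp [dlt, h]
  · by_cases h1 : i = q
    · subst h1; simp [dlt, h0]
    · simp [dlt, h0, h1]

private lemma dlt_sum_sq {n : ℕ} {p q : Fin n} (h : p ≠ q) :
    ∑ i, dlt p q i ^ 2 = 2 := by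
  simp only [dlt_sq h]
  rw [Finset.sum_add_distrib]
  simp
  norm_num

private lemma dlt_sum_cube {n : ℕ} (p q : Fin n) :
    ∑ i, dlt p q i ^ 3 = 0 := by
  have : ∀ i : Fin n, dlt p q i ^ 3 = dlt p q i := by
    intro i; unfold dlt; split_ifs <;> norm_num
  simp only [this]; exact dlt_sum p q

private lemma dlt_sum_four {n : ℕ} {p q : Fin n} (h : p ≠ q) :
    ∑ i, dlt p q i ^ 4 = 2 := by
  have : ∀ i : Fin n, dlt p q i ^ 4 = dlt p q i ^ 2 := by
    intro i; unfold dlt; split_ifs <;> norm_num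
  simp only [this]; exact dlt_sum_sq h

private lemma dlt_mul {n : ℕ} {p q r s : Fin n}
    (hpr : p ≠ r) (hps : p ≠ s) (hqr : q ≠ r) (hqs : q ≠ s) (i : Fin n) :
    dlt p q i * dlt r s i = 0 := by
  by_cases h0 : i = p
  · subst h0; simp [dlt, hpr, hps]
  · by_cases h1 : i = q
    · subst h1; simp [dlt, hqr, hqs]
    · simp [dlt, h0, h1]

private lemma quart_sum {n : ℕ} {p0 p1 q0 q1 : Fin n}
    (h01 : p0 ≠ p1) (hq : q0 ≠ q1)
    (h0q0 : p0 ≠ q0) (h0q1 : p0 ≠ q1) (h1q0 : p1 ≠ q0) (h1q1 : p1 ≠ q1) :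
    ∑ i : Fin n, ∑ j : Fin n,
      ((dlt p0 p1 i - dlt p0 p1 j)^4
        - 6*(dlt p0 p1 i - dlt p0 p1 j)^2*(dlt q0 q1 i - dlt q0 q1 j)^2
        + (dlt q0 q1 i - dlt q0 q1 j)^4) = 8 * (n : ℝ) := by
  have hAB : ∀ i, dlt p0 p1 i * dlt q0 q1 i = 0 :=
    dlt_mul h0q0 h0q1 h1q0 h1q1
  have hG : ∀ i j : Fin n,
      (dlt p0 p1 i - dlt p0 p1 j)^4
        - 6*(dlt p0 p1 i - dlt p0 p1 j)^2*(dlt q0 q1 i - dlt q0 q1 j)^2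
        + (dlt q0 q1 i - dlt q0 q1 j)^4
      = (dlt p0 p1 i^4 + dlt q0 q1 i^4)
        + (-4*dlt p0 p1 i^3)*dlt p0 p1 j
        + (6*dlt p0 p1 i^2 - 6*dlt q0 q1 i^2)*(dlt p0 p1 j^2)
        + (-4*dlt p0 p1 i)*(dlt p0 p1 j^3) + dlt p0 p1 j^4
        + (-4*dlt q0 q1 i^3)*dlt q0 q1 j
        + (6*dlt q0 q1 i^2 - 6*dlt p0 p1 i^2)*(dlt q0 q1 j^2)
        + (-4*dlt q0 q1 i)*(dlt q0 q1 j^3) + dlt q0 q1 j^4 := by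
    intro i j
    linear_combination
      (-6*(dlt p0 p1 i * dlt q0 q1 i - 2*dlt p0 p1 i*dlt q0 q1 j
        - 2*dlt p0 p1 j*dlt q0 q1 i + 4*dlt p0 p1 j*dlt q0 q1 j)) * hAB i
      + (-6*(-2*dlt p0 p1 i*dlt q0 q1 j - 2*dlt p0 p1 j*dlt q0 q1 i
        + dlt p0 p1 j*dlt q0 q1 j)) * hAB j
  have hInner : ∀ i : Fin n,
      (∑ j : Fin n, ((dlt p0 p1 i - dlt p0 p1 j)^4
        - 6*(dlt p0 p1 i - dlt p0 p1 j)^2*(dlt q0 q1 i - dlt q0 q1 j)^2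
        + (dlt q0 q1 i - dlt q0 q1 j)^4))
      = (n : ℝ) * (dlt p0 p1 i^4 + dlt q0 q1 i^4) + 4 := by
    intro i
    rw [Finset.sum_congr rfl fun j _ => hG i j]
    simp only [Finset.sum_add_distrib, ← Finset.mul_sum, Finset.sum_const,
      Finset.card_univ, Fintype.card_fin, nsmul_eq_mul]
    rw [dlt_sum, dlt_sum_sq h01, dlt_sum_cube, dlt_sum_four h01,
      dlt_sum, dlt_sum_sq hq, dlt_sum_cube, dlt_sum_four hq]
    ring
  rw [Finset.sum_congr rfl fun i _ => hInner i]
  simp only [Finset.sum_add_distrib, ← Finset.mul_sum, Finset.sum_const,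
    Finset.card_univ, Fintype.card_fin, nsmul_eq_mul]
  rw [dlt_sum_four h01, dlt_sum_four hq]
  ring

private lemma inner_root {n : ℕ} (c : ℝ) (i j p q : Fin n) :
    (inner ℝ (c • (EuclideanSpace.single i (1:ℝ) - EuclideanSpace.single j (1:ℝ)))
        (EuclideanSpace.single p (1:ℝ) - EuclideanSpace.single q (1:ℝ)) : ℝ)
      = c * (dlt p q i - dlt p q j) := by
  simp [dlt, inner_sub_left, inner_sub_right, real_inner_smul_left,
    EuclideanSpace.inner_single_left, EuclideanSpace.single_apply, eq_comm]
  ring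

private lemma root_coord {n : ℕ} (c : ℝ) (i j k : Fin n) :
    (c • (EuclideanSpace.single i (1:ℝ) - EuclideanSpace.single j (1:ℝ))) k
      = c * ((if k = i then (1:ℝ) else 0) - (if k = j then 1 else 0)) := by
  simp [EuclideanSpace.single_apply]

private lemma root_inj {n : ℕ} {c c' : ℝ} {i j i' j' : Fin n}
    (hc : c = 1 ∨ c = -1) (hc' : c' = 1 ∨ c' = -1) (hij : i < j) (hij' : i' < j')
    (h : c • (EuclideanSpace.single i (1:ℝ) - EuclideanSpace.single j (1:ℝ))
      = c' • (EuclideanSpace.single i' (1:ℝ) - EuclideanSpace.single j' (1:ℝ))) :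
    c = c' ∧ i = i' ∧ j = j' := by
  have hk : ∀ k : Fin n,
      c * ((if k = i then (1:ℝ) else 0) - (if k = j then 1 else 0))
        = c' * ((if k = i' then (1:ℝ) else 0) - (if k = j' then 1 else 0)) := by
    intro k
    rw [← root_coord, ← root_coord, h]
  have e1 := hk i
  have e2 := hk j
  rw [if_pos rfl, if_neg hij.ne] at e1
  rw [if_pos rfl, if_neg hij.ne'] at e2
  rcases hc with rfl | rfl <;> rcases hc' with rfl | rfl
  · by_cases hA : i = i'
    · by_cases hB : i = j'
      · exfalso; rw [if_pos hA, if_pos hB] at e1; norm_num at e1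
      · refine ⟨rfl, hA, ?_⟩
        by_cases hC : j = i'
        · exact absurd (hA.trans hC.symm) hij.ne
        · by_cases hD : j = j'
          · exact hD
          · exfalso; rw [if_neg hC, if_neg hD] at e2; norm_num at e2
    · exfalso
      by_cases hB : i = j'
      · rw [if_neg hA, if_pos hB] at e1; norm_num at e1
      · rw [if_neg hA, if_neg hB] at e1; norm_num at e1
  · exfalso
    by_cases hB : i = j'
    · by_cases hC : j = i'
      · subst hB; subst hC; exact absurd hij' (lt_asymm hij)
      · by_cases hD : j = j'
        · exact absurd (hD.trans hB.symm) hij.ne'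
        · rw [if_neg hC, if_neg hD] at e2; norm_num at e2
    · by_cases hA : i = i'
      · rw [if_pos hA, if_neg hB] at e1; norm_num at e1
      · rw [if_neg hA, if_neg hB] at e1; norm_num at e1
  · exfalso
    by_cases hB : i = j'
    · by_cases hC : j = i'
      · subst hB; subst hC; exact absurd hij' (lt_asymm hij)
      · by_cases hD : j = j'
        · exact absurd (hD.trans hB.symm) hij.ne'
        · rw [if_neg hC, if_neg hD] at e2; norm_num at e2
    · by_cases hA : i = i'
      · rw [if_pos hA, if_neg hB] at e1; norm_num at e1
      · rw [if_neg hA, if_neg hB] at e1; norm_num at e1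
  · by_cases hA : i = i'
    · by_cases hB : i = j'
      · exfalso; rw [if_pos hA, if_pos hB] at e1; norm_num at e1
      · refine ⟨rfl, hA, ?_⟩
        by_cases hC : j = i'
        · exact absurd (hA.trans hC.symm) hij.ne
        · by_cases hD : j = j'
          · exact hD
          · exfalso; rw [if_neg hC, if_neg hD] at e2; norm_num at e2
    · exfalso
      by_cases hB : i = j'
      · rw [if_neg hA, if_pos hB] at e1; norm_num at e1
      · rw [if_neg hA, if_neg hB] at e1; norm_num at e1

private lemma double_sum {n : ℕ} (G : Fin n → Fin n → ℝ)
    (hsym : ∀ i j, G i j = G j i) (hdiag : ∀ i, G i i = 0) :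
    (∑ q ∈ Finset.univ.filter (fun q : Fin n × Fin n => q.1 < q.2), G q.1 q.2)
      + (∑ q ∈ Finset.univ.filter (fun q : Fin n × Fin n => q.1 < q.2), G q.1 q.2)
    = ∑ i : Fin n, ∑ j : Fin n, G i j := by
  have hsplit : ∑ q : Fin n × Fin n, G q.1 q.2 = ∑ i : Fin n, ∑ j : Fin n, G i j :=
    Fintype.sum_prod_type (fun q : Fin n × Fin n => G q.1 q.2)
  rw [← hsplit]
  rw [← Finset.sum_filter_add_sum_filter_not Finset.univ
      (fun q : Fin n × Fin n => q.1 < q.2) (fun q => G q.1 q.2)]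
  congr 1
  rw [← Finset.sum_filter_add_sum_filter_not
      (Finset.univ.filter (fun q : Fin n × Fin n => ¬ q.1 < q.2))
      (fun q => q.2 < q.1) (fun q => G q.1 q.2)]
  have hz : ∑ q ∈ ((Finset.univ.filter (fun q : Fin n × Fin n => ¬ q.1 < q.2)).filter
      (fun q => ¬ q.2 < q.1)), G q.1 q.2 = 0 := by
    apply Finset.sum_eq_zero
    intro q hq
    simp only [Finset.mem_filter] at hq
    have h12 : q.1 = q.2 := le_antisymm (not_lt.1 hq.2) (not_lt.1 hq.1.2)
    rw [h12, hdiag]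
  rw [hz, add_zero]
  apply Finset.sum_equiv (Equiv.prodComm (Fin n) (Fin n))
  · intro q
    simp only [Finset.mem_filter, Finset.mem_univ, true_and, Equiv.prodComm_apply,
      Prod.fst_swap, Prod.snd_swap]
    exact ⟨fun h => ⟨lt_asymm h, h⟩, fun h => h.2⟩
  · intro q _
    exact hsym q.1 q.2

/-- For the root system of type `A_ℓ` (`ℓ ≥ 3`), realized in `ℝ^{ℓ+1}` as
`Φ = {±(e_i − e_j) : i < j}`, with `u = e₁ − e₂` and `v = e_ℓ − e_{ℓ+1}`,
one has `Σ_{α∈Φ} (⟨α,u⟩⁴ − 6⟨α,u⟩²⟨α,v⟩² + ⟨α,v⟩⁴) = 8ℓ + 8`. -/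
theorem rootSum_typeA (ℓ : ℕ) (hℓ : 3 ≤ ℓ) :
    let e : Fin (ℓ + 1) → EuclideanSpace ℝ (Fin (ℓ + 1)) :=
      fun i => EuclideanSpace.single i (1 : ℝ)
    let u : EuclideanSpace ℝ (Fin (ℓ + 1)) := e ⟨0, by omega⟩ - e ⟨1, by omega⟩
    let v : EuclideanSpace ℝ (Fin (ℓ + 1)) := e ⟨ℓ - 1, by omega⟩ - e ⟨ℓ, by omega⟩
    let Φ : Finset (EuclideanSpace ℝ (Fin (ℓ + 1))) :=
      (({(1 : ℝ), -1} : Finset ℝ) ×ˢ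
          ((Finset.univ : Finset (Fin (ℓ + 1) × Fin (ℓ + 1))).filter
            fun p => p.1 < p.2)).image
        fun p => p.1 • (e p.2.1 - e p.2.2)
    ∑ α ∈ Φ,
        ((inner ℝ α u : ℝ) ^ 4 - 6 * (inner ℝ α u : ℝ) ^ 2 * (inner ℝ α v : ℝ) ^ 2
          + (inner ℝ α v : ℝ) ^ 4)
      = 8 * (ℓ : ℝ) + 8 := by
  intro e u v Φ
  have hP0 : (0 : ℕ) < ℓ + 1 := by omega
  have hP1 : (1 : ℕ) < ℓ + 1 := by omega
  have hQ0 : ℓ - 1 < ℓ + 1 := by omega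
  have hQ1 : ℓ < ℓ + 1 := by omega
  set P0 : Fin (ℓ + 1) := ⟨0, hP0⟩ with hP0def
  set P1 : Fin (ℓ + 1) := ⟨1, hP1⟩ with hP1def
  set Q0 : Fin (ℓ + 1) := ⟨ℓ - 1, hQ0⟩ with hQ0def
  set Q1 : Fin (ℓ + 1) := ⟨ℓ, hQ1⟩ with hQ1def
  have h01 : P0 ≠ P1 := by simp [hP0def, hP1def, Fin.ext_iff]
  have hq : Q0 ≠ Q1 := by simp [hQ0def, hQ1def, Fin.ext_iff]; omega
  have h0q0 : P0 ≠ Q0 := by simp [hP0def, hQ0def, Fin.ext_iff]; omega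
  have h0q1 : P0 ≠ Q1 := by simp [hP0def, hQ1def, Fin.ext_iff]; omega
  have h1q0 : P1 ≠ Q0 := by simp [hP1def, hQ0def, Fin.ext_iff]; omega
  have h1q1 : P1 ≠ Q1 := by simp [hP1def, hQ1def, Fin.ext_iff]; omega
  have hue : u = EuclideanSpace.single P0 (1:ℝ) - EuclideanSpace.single P1 (1:ℝ) := rfl
  have hve : v = EuclideanSpace.single Q0 (1:ℝ) - EuclideanSpace.single Q1 (1:ℝ) := rfl
  have hee : ∀ i : Fin (ℓ+1), e i = EuclideanSpace.single i (1:ℝ) := fun _ => rfl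
  have hinj : ∀ p ∈ (({(1 : ℝ), -1} : Finset ℝ) ×ˢ
      ((Finset.univ : Finset (Fin (ℓ + 1) × Fin (ℓ + 1))).filter fun p => p.1 < p.2)),
      ∀ p' ∈ (({(1 : ℝ), -1} : Finset ℝ) ×ˢ
      ((Finset.univ : Finset (Fin (ℓ + 1) × Fin (ℓ + 1))).filter fun p => p.1 < p.2)),
      p.1 • (e p.2.1 - e p.2.2) = p'.1 • (e p'.2.1 - e p'.2.2) → p = p' := by
    intro p hp p' hp' heq
    simp only [Finset.mem_product, Finset.mem_filter, Finset.mem_insert,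
      Finset.mem_singleton, Finset.mem_univ, true_and] at hp hp'
    rw [hee, hee, hee, hee] at heq
    obtain ⟨h1, h2, h3⟩ := root_inj hp.1 hp'.1 hp.2 hp'.2 heq
    exact Prod.ext h1 (Prod.ext h2 h3)
  rw [show Φ = (({(1 : ℝ), -1} : Finset ℝ) ×ˢ
      ((Finset.univ : Finset (Fin (ℓ + 1) × Fin (ℓ + 1))).filter fun p => p.1 < p.2)).image
      (fun p => p.1 • (e p.2.1 - e p.2.2)) from rfl]
  rw [Finset.sum_image hinj]
  rw [Finset.sum_product]
  rw [Finset.sum_pair (show (1:ℝ) ≠ -1 by norm_num)]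
  have hterm : ∀ c : ℝ, c = 1 ∨ c = -1 → ∀ q : Fin (ℓ+1) × Fin (ℓ+1),
      ((inner ℝ (c • (e q.1 - e q.2)) u : ℝ) ^ 4
        - 6 * (inner ℝ (c • (e q.1 - e q.2)) u : ℝ) ^ 2 * (inner ℝ (c • (e q.1 - e q.2)) v : ℝ) ^ 2
        + (inner ℝ (c • (e q.1 - e q.2)) v : ℝ) ^ 4)
      = ((dlt P0 P1 q.1 - dlt P0 P1 q.2)^4
          - 6*(dlt P0 P1 q.1 - dlt P0 P1 q.2)^2*(dlt Q0 Q1 q.1 - dlt Q0 Q1 q.2)^2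
          + (dlt Q0 Q1 q.1 - dlt Q0 Q1 q.2)^4) := by
    intro c hc q
    rw [hue, hve, hee, hee, inner_root, inner_root]
    rcases hc with rfl | rfl <;> ring
  rw [Finset.sum_congr rfl (fun q _ => hterm 1 (Or.inl rfl) q),
    Finset.sum_congr rfl (fun q _ => hterm (-1) (Or.inr rfl) q)]
  have hdouble := double_sum
    (fun i j => (dlt P0 P1 i - dlt P0 P1 j)^4
      - 6*(dlt P0 P1 i - dlt P0 P1 j)^2*(dlt Q0 Q1 i - dlt Q0 Q1 j)^2
      + (dlt Q0 Q1 i - dlt Q0 Q1 j)^4)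
    (fun i j => by ring) (fun i => by ring)
  have hq8 : ∑ i : Fin (ℓ+1), ∑ j : Fin (ℓ+1),
      ((dlt P0 P1 i - dlt P0 P1 j)^4
        - 6*(dlt P0 P1 i - dlt P0 P1 j)^2*(dlt Q0 Q1 i - dlt Q0 Q1 j)^2
        + (dlt Q0 Q1 i - dlt Q0 Q1 j)^4) = 8 * (ℓ:ℝ) + 8 := by
    rw [quart_sum h01 hq h0q0 h0q1 h1q0 h1q1]
    push_cast; ring
  exact hdouble.trans hq8
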